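/- Let a ∈ ℝ and let B be a real number with m((x,∞))·(S(x) − S(a)) ≤ B for all x ≥ a. Then for every t > a, ∫_{(t,∞)} √(S(x) − S(a)) dm(x) ≤ 2B / √(S(t) − S(a)). -/

import Mathlib

open MeasureTheory Set
open scoped ENNReal

private lemma div_sq_mul_cancel (a r : ℝ≥0∞) (hr0 : r ≠ 0) (hrt : r ≠ ∞) :
    a / (r * r) * r = a / r := by
  rw [div_eq_mul_inv, ENNReal.mul_inv (Or.inl hr0) (Or.inr hr0), ← mul_assoc, mul_assoc,
    ENNReal.inv_mul_cancel hr0 hrt, mul_one, ← div_eq_mul_inv]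

/-- If `m((x,∞))·(S(x) − S(a)) ≤ B` for all `x ≥ a`, then for every `t > a`,
`∫_{(t,∞)} √(S(x) − S(a)) dm(x) ≤ 2B / √(S(t) − S(a))`. -/
theorem integral_sqrt_tail_le
    (S : ℝ → ℝ) (hScont : Continuous S) (hSmono : StrictMono S)
    (hStop : Filter.Tendsto S Filter.atTop Filter.atTop)
    (m : Measure ℝ) [IsFiniteMeasure m]
    (a B : ℝ)
    (hB : ∀ x : ℝ, a ≤ x → m (Ioi x) * ENNReal.ofReal (S x - S a) ≤ ENNReal.ofReal B) :
    ∀ t : ℝ, a < t →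
      ∫⁻ x in Ioi t, ENNReal.ofReal (Real.sqrt (S x - S a)) ∂m ≤
        ENNReal.ofReal (2 * B / Real.sqrt (S t - S a)) := by
  intro t ht
  have hat : a ≤ t := ht.le
  set v : ℝ := S t - S a with hv
  have hv0 : 0 < v := sub_pos.2 (hSmono ht)
  have hsv0 : 0 < Real.sqrt v := Real.sqrt_pos.2 hv0
  rcases lt_or_ge B 0 with hBneg | hB0
  · -- If B < 0 then m (Ioi t) = 0 and the LHS vanishes.
    have h0 : m (Ioi t) = 0 := by
      have h := hB t hat
      rw [ENNReal.ofReal_eq_zero.2 hBneg.le, le_zero_iff] at h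
      rcases mul_eq_zero.1 h with h | h
      · exact h
      · exact absurd h (by simp only [ENNReal.ofReal_eq_zero, not_le]; exact hv0)
    rw [setLIntegral_measure_zero _ _ h0]
    exact zero_le
  have hf_cont : Continuous fun x => Real.sqrt (S x - S a) :=
    Real.continuous_sqrt.comp (hScont.sub continuous_const)
  rw [lintegral_eq_lintegral_meas_lt (m.restrict (Ioi t))
      (Filter.Eventually.of_forall fun x => Real.sqrt_nonneg _)
      hf_cont.measurable.aemeasurable]
  set g : ℝ → ℝ≥0∞ := fun s => ENNReal.ofReal B / ENNReal.ofReal (max v (s ^ 2)) with hg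
  have hg_meas : Measurable g :=
    (measurable_const.div
      ((continuous_const.max (continuous_pow 2)).measurable.ennreal_ofReal))
  have key : ∀ s ∈ Ioi (0 : ℝ),
      (m.restrict (Ioi t)) {x | s < Real.sqrt (S x - S a)} ≤ g s := by
    intro s hs
    have hs0 : (0 : ℝ) < s := hs
    obtain ⟨c, hac, hcw, hsub⟩ : ∃ c, a ≤ c ∧ S c - S a = max v (s ^ 2) ∧
        {x | s < Real.sqrt (S x - S a)} ∩ Ioi t ⊆ Ioi c := by
      rcases le_or_gt (s ^ 2) v with h | h
      · exact ⟨t, hat, by rw [max_eq_left h], inter_subset_right⟩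
      · obtain ⟨b, hb⟩ := (hStop.eventually_ge_atTop (S a + s ^ 2)).exists
        have hab : a ≤ b := hSmono.le_iff_le.1 (by nlinarith [sq_nonneg s])
        obtain ⟨c, hc, hSc⟩ := intermediate_value_Icc hab hScont.continuousOn
          ⟨by nlinarith [sq_nonneg s], hb⟩
        refine ⟨c, hc.1, by rw [max_eq_right h.le]; linarith, ?_⟩
        rintro x ⟨hxs, hxt⟩
        have hx2 : s ^ 2 < S x - S a := (Real.lt_sqrt hs0.le).1 hxs
        exact hSmono.lt_iff_lt.1 (by linarith)
    have hmset : MeasurableSet {x : ℝ | s < Real.sqrt (S x - S a)} :=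
      measurableSet_lt measurable_const hf_cont.measurable
    rw [Measure.restrict_apply hmset]
    calc m ({x | s < Real.sqrt (S x - S a)} ∩ Ioi t) ≤ m (Ioi c) := measure_mono hsub
      _ ≤ ENNReal.ofReal B / ENNReal.ofReal (max v (s ^ 2)) := by
          rw [ENNReal.le_div_iff_mul_le
            (Or.inl (ENNReal.ofReal_pos.2 (lt_of_lt_of_le hv0 (le_max_left _ _))).ne')
            (Or.inl ENNReal.ofReal_ne_top)]
          rw [← hcw]
          exact hB c hac
  refine le_trans (setLIntegral_mono hg_meas key) ?_
  -- Split the integration domain at √v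
  rw [← Ioc_union_Ioi_eq_Ioi hsv0.le,
    lintegral_union measurableSet_Ioi Ioc_disjoint_Ioi_same]
  have part1 : ∫⁻ s in Ioc (0 : ℝ) (Real.sqrt v), g s = ENNReal.ofReal (B / Real.sqrt v) := by
    have hcongr : ∀ s ∈ Ioc (0 : ℝ) (Real.sqrt v),
        g s = ENNReal.ofReal B / ENNReal.ofReal v := by
      intro s hs
      have h1 : s ^ 2 ≤ v := by
        have := Real.sq_sqrt hv0.le
        nlinarith [hs.1, hs.2]
      simp only [hg, max_eq_left h1]
    rw [setLIntegral_congr_fun measurableSet_Ioc hcongr,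
      setLIntegral_const, Real.volume_Ioc]
    have hvr : ENNReal.ofReal v = ENNReal.ofReal (Real.sqrt v) * ENNReal.ofReal (Real.sqrt v) := by
      rw [← ENNReal.ofReal_mul (Real.sqrt_nonneg v), Real.mul_self_sqrt hv0.le]
    rw [sub_zero, hvr, div_sq_mul_cancel _ _ (by simp [ENNReal.ofReal_eq_zero, not_le, hsv0])
      ENNReal.ofReal_ne_top, ENNReal.ofReal_div_of_pos hsv0]
  have part2 : ∫⁻ s in Ioi (Real.sqrt v), g s = ENNReal.ofReal (B / Real.sqrt v) := by
    have hcongr : ∀ s ∈ Ioi (Real.sqrt v), g s = ENNReal.ofReal (B / s ^ 2) := by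
      intro s hs
      have hs0 : (0 : ℝ) < s := lt_of_le_of_lt (Real.sqrt_nonneg v) hs
      have h1 : v < s ^ 2 := (Real.sqrt_lt' hs0).1 hs
      simp only [hg, max_eq_right h1.le]
      rw [ENNReal.ofReal_div_of_pos (by positivity)]
    rw [setLIntegral_congr_fun measurableSet_Ioi hcongr]
    have hint : IntegrableOn (fun s : ℝ => B / s ^ 2) (Ioi (Real.sqrt v)) := by
      have h2 : IntegrableOn (fun s : ℝ => B * s ^ (-2 : ℝ)) (Ioi (Real.sqrt v)) :=
        (integrableOn_Ioi_rpow_of_lt (a := (-2 : ℝ)) (by norm_num) hsv0).const_mul B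
      refine h2.congr_fun (fun x hx => ?_) measurableSet_Ioi
      have hx0 : (0 : ℝ) < x := lt_of_le_of_lt (Real.sqrt_nonneg v) hx
      dsimp only
      rw [Real.rpow_neg hx0.le, show ((2 : ℝ)) = ((2 : ℕ) : ℝ) by norm_num,
        Real.rpow_natCast]
      ring
    rw [← ofReal_integral_eq_lintegral_ofReal hint
      (Filter.Eventually.of_forall fun s => by positivity)]
    congr 1
    have heq : ∀ x ∈ Ioi (Real.sqrt v), B * x ^ (-2 : ℝ) = B / x ^ 2 := by
      intro x hx
      have hx0 : (0 : ℝ) < x := lt_of_le_of_lt (Real.sqrt_nonneg v) hx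
      rw [Real.rpow_neg hx0.le, show ((2 : ℝ)) = ((2 : ℕ) : ℝ) by norm_num,
        Real.rpow_natCast]
      ring
    rw [← setIntegral_congr_fun measurableSet_Ioi heq, integral_const_mul,
      integral_Ioi_rpow_of_lt (by norm_num) hsv0]
    rw [show (-2 : ℝ) + 1 = -1 by norm_num, Real.rpow_neg_one]
    field_simp
  rw [part1, part2, ← ENNReal.ofReal_add (by positivity) (by positivity)]
  apply ENNReal.ofReal_le_ofReal
  rw [← add_div]
  ring_nf
  exact le_refl _
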